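/- Let f, g : ℝ^n × ℝ^n → ℂ be smooth and ℤ^{2n}-periodic. Then for every integer N ≥ 0, Σ_{a+b=N, a,b≥0} (1/a!) Δ^a (C_b(f,g)) = Σ_{a+b+c=N, a,b,c≥0} (1/(b!·c!)) Č_a(Δ^b f, Δ^c g). (This says the formal operator e^{ℏΔ} intertwines the star products ⋆ and ⋆̌, order by order in ℏ.) -/

import Mathlib

open MeasureTheory Complex
open scoped Real

noncomputable section

/-- The unit box `[0,1]^n` in `ℝ^n`. -/
def box (n : ℕ) : Set (Fin n → ℝ) := Set.univ.pi fun _ => Set.Icc (0:ℝ) 1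

/-- `ℤ^{2n}`-periodicity of a function `f(x,y)` on `ℝ^n × ℝ^n`. -/
def IsPeriodic2 (n : ℕ) (f : (Fin n → ℝ) × (Fin n → ℝ) → ℂ) : Prop :=
  ∀ (x y : Fin n → ℝ) (a b : Fin n → ℤ),
    f (x + fun i => (a i : ℝ), y + fun i => (b i : ℝ)) = f (x, y)

/-- The `m`-th fibrewise Fourier coefficient
`f̂_m(y) = ∫_{[0,1]^n} f(x,y) e^{-2π√-1 m·x} dx`. -/
def fhat (n : ℕ) (f : (Fin n → ℝ) × (Fin n → ℝ) → ℂ) (m : Fin n → ℤ) (y : Fin n → ℝ) : ℂ :=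
  ∫ x in box n, f (x, y) * Complex.exp (-2 * π * Complex.I * ∑ i, (m i : ℂ) * (x i : ℂ))

/-- `N_m = ∏_{i : m_i ≠ 0} 1/(2π√-1 m_i)`. -/
def Nm (n : ℕ) (m : Fin n → ℤ) : ℂ :=
  ∏ i ∈ Finset.univ.filter (fun i => m i ≠ 0), (1 / (2 * π * Complex.I * (m i : ℂ)))
/-- Partial derivative `∂/∂x^i` of a function `f(x,y)` on `ℝ^n × ℝ^n`. -/
def pderivX (n : ℕ) (i : Fin n) (f : (Fin n → ℝ) × (Fin n → ℝ) → ℂ) :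
    (Fin n → ℝ) × (Fin n → ℝ) → ℂ :=
  fun p => fderiv ℝ f p (Pi.single i (1:ℝ), 0)

/-- Partial derivative `∂/∂y^i` of a function `f(x,y)` on `ℝ^n × ℝ^n`. -/
def pderivY (n : ℕ) (i : Fin n) (f : (Fin n → ℝ) × (Fin n → ℝ) → ℂ) :
    (Fin n → ℝ) × (Fin n → ℝ) → ℂ :=
  fun p => fderiv ℝ f p (0, Pi.single i (1:ℝ))

/-- Iterated `x`-derivative `∂^j/∂x^{i_1}⋯∂x^{i_j}` along a list of indices. -/
def derivX (n : ℕ) (l : List (Fin n)) (f : (Fin n → ℝ) × (Fin n → ℝ) → ℂ) :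
    (Fin n → ℝ) × (Fin n → ℝ) → ℂ :=
  l.foldr (pderivX n) f

/-- Iterated `y`-derivative `∂^j/∂y^{i_1}⋯∂y^{i_j}` along a list of indices. -/
def derivY (n : ℕ) (l : List (Fin n)) (f : (Fin n → ℝ) × (Fin n → ℝ) → ℂ) :
    (Fin n → ℝ) × (Fin n → ℝ) → ℂ :=
  l.foldr (pderivY n) f

/-- `C_j(f,g) = (1/(j!·(2π√-1)^j)) Σ_{i_1,…,i_j} (∂^j f/∂y^{i_1}⋯∂y^{i_j})
(∂^j g/∂x^{i_1}⋯∂x^{i_j})`. -/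
def Cop (n j : ℕ) (f g : (Fin n → ℝ) × (Fin n → ℝ) → ℂ) :
    (Fin n → ℝ) × (Fin n → ℝ) → ℂ :=
  fun p => (1 / ((Nat.factorial j : ℂ) * (2 * π * Complex.I) ^ j)) *
    ∑ v : Fin j → Fin n, derivY n (List.ofFn v) f p * derivX n (List.ofFn v) g p

/-- `Č_j(f,g) = ((√-1)^j/((2π)^j j!)) Σ_{i_1,…,i_j} (∂^j f/∂x^{i_1}⋯∂x^{i_j})
(∂^j g/∂y^{i_1}⋯∂y^{i_j})`. -/
def CopCheck (n j : ℕ) (f g : (Fin n → ℝ) × (Fin n → ℝ) → ℂ) :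
    (Fin n → ℝ) × (Fin n → ℝ) → ℂ :=
  fun p => (Complex.I ^ j / ((2 * (π : ℂ)) ^ j * (Nat.factorial j : ℂ))) *
    ∑ v : Fin j → Fin n, derivX n (List.ofFn v) f p * derivY n (List.ofFn v) g p

/-- The operator `Δ = (√-1/(2π)) Σ_i ∂²/∂x^i ∂y^i`. -/
def Del (n : ℕ) (f : (Fin n → ℝ) × (Fin n → ℝ) → ℂ) :
    (Fin n → ℝ) × (Fin n → ℝ) → ℂ :=
  fun p => Complex.I / (2 * π) * ∑ i, pderivX n i (pderivY n i f) p

namespace Stmt14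

variable {n : ℕ}

abbrev EE (n : ℕ) := (Fin n → ℝ) × (Fin n → ℝ)

abbrev Sm (h : EE n → ℂ) : Prop := ContDiff ℝ (⊤:ℕ∞) h

theorem Sm.diff {f : EE n → ℂ} (hf : Sm f) : Differentiable ℝ f :=
  hf.differentiable (by simp)

/-- generic directional derivative -/
def pdir (n : ℕ) (w : EE n) (f : EE n → ℂ) : EE n → ℂ := fun p => fderiv ℝ f p w

theorem pderivX_eq_pdir (i : Fin n) (f : EE n → ℂ) :
    pderivX n i f = pdir n (Pi.single i (1:ℝ), 0) f := rfl


theorem pderivY_eq_pdir' (i : Fin n) (f : EE n → ℂ) :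
    pderivY n i f = pdir n (0, Pi.single i (1:ℝ)) f := rfl

theorem Sm.pdir {f : EE n → ℂ} (hf : Sm f) (w : EE n) : Sm (pdir n w f) :=
  (hf.fderiv_right (by exact_mod_cast le_top)).clm_apply contDiff_const

theorem Sm.pdX {f : EE n → ℂ} (hf : Sm f) (i : Fin n) : Sm (pderivX n i f) := hf.pdir _
theorem Sm.pdY {f : EE n → ℂ} (hf : Sm f) (i : Fin n) : Sm (pderivY n i f) := hf.pdir _

theorem Sm.dX {f : EE n → ℂ} (hf : Sm f) (l : List (Fin n)) : Sm (derivX n l f) := by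
  induction l with
  | nil => exact hf
  | cons i l ih => exact ih.pdX i

theorem Sm.dY {f : EE n → ℂ} (hf : Sm f) (l : List (Fin n)) : Sm (derivY n l f) := by
  induction l with
  | nil => exact hf
  | cons i l ih => exact ih.pdY i

theorem pdir_swap {f : EE n → ℂ} (hf : Sm f) (v w : EE n) :
    pdir n v (pdir n w f) = pdir n w (pdir n v f) := by
  have hd : Differentiable ℝ f := hf.diff
  have hf' : ContDiff ℝ (⊤:ℕ∞) (fderiv ℝ f) := hf.fderiv_right (by exact_mod_cast le_top)
  have hd' : ∀ p, DifferentiableAt ℝ (fderiv ℝ f) p := fun p => hf'.differentiable (by simp) p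
  funext p
  have h1 : ∀ u : EE n, fderiv ℝ (fun q => fderiv ℝ f q u) p = (fderiv ℝ (fderiv ℝ f) p).flip u := by
    intro u
    have := fderiv_clm_apply (c := fderiv ℝ f) (u := fun _ => u) (hd' p) (differentiableAt_const u)
    simpa using this
  have hsymm := second_derivative_symmetric (f := f) (f' := fderiv ℝ f)
      (f'' := fderiv ℝ (fderiv ℝ f) p) (fun y => (hd y).hasFDerivAt) (hd' p).hasFDerivAt
  show fderiv ℝ (fun q => fderiv ℝ f q w) p v = fderiv ℝ (fun q => fderiv ℝ f q v) p w
  rw [h1 w, h1 v]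
  exact hsymm v w

theorem pdir_sum {ι : Type*} (s : Finset ι) (F : ι → EE n → ℂ) (hF : ∀ t ∈ s, Sm (F t)) (w : EE n) :
    pdir n w (fun p => ∑ t ∈ s, F t p) = fun p => ∑ t ∈ s, pdir n w (F t) p := by
  funext p
  show fderiv ℝ (fun p => ∑ t ∈ s, F t p) p w = _
  rw [fderiv_fun_sum (fun t ht => ((hF t ht).diff p))]
  simp [pdir]

theorem pdir_const_mul {u : EE n → ℂ} (hu : Sm u) (c : ℂ) (w : EE n) :
    pdir n w (fun p => c * u p) = fun p => c * pdir n w u p := by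
  funext p
  show fderiv ℝ (fun p => c * u p) p w = _
  rw [fderiv_const_mul (hu.diff p)]
  simp [pdir]

theorem pdir_mul {u v : EE n → ℂ} (hu : Sm u) (hv : Sm v) (w : EE n) :
    pdir n w (fun p => u p * v p) = fun p => pdir n w u p * v p + u p * pdir n w v p := by
  funext p
  show fderiv ℝ (fun p => u p * v p) p w = _
  rw [fderiv_fun_mul (hu.diff p) (hv.diff p)]
  simp [pdir, smul_eq_mul]
  ring

theorem pdir_add {u v : EE n → ℂ} (hu : Sm u) (hv : Sm v) (w : EE n) :
    pdir n w (fun p => u p + v p) = fun p => pdir n w u p + pdir n w v p := by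
  funext p
  show fderiv ℝ (fun p => u p + v p) p w = _
  rw [fderiv_fun_add (hu.diff p) (hv.diff p)]
  simp [pdir]



theorem derivX_cons (i : Fin n) (l : List (Fin n)) (f : EE n → ℂ) :
    derivX n (i :: l) f = pderivX n i (derivX n l f) := rfl

theorem derivY_cons (i : Fin n) (l : List (Fin n)) (f : EE n → ℂ) :
    derivY n (i :: l) f = pderivY n i (derivY n l f) := rfl

/-- commute a pdir past an iterated x-derivative -/
theorem derivX_pdir {f : EE n → ℂ} (hf : Sm f) (l : List (Fin n)) (w : EE n) :
    derivX n l (pdir n w f) = pdir n w (derivX n l f) := by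
  induction l with
  | nil => rfl
  | cons i l ih =>
      rw [derivX_cons, derivX_cons, ih, pderivX_eq_pdir, pdir_swap (hf.dX l) _ w]
      rfl

theorem derivY_pdir {f : EE n → ℂ} (hf : Sm f) (l : List (Fin n)) (w : EE n) :
    derivY n l (pdir n w f) = pdir n w (derivY n l f) := by
  induction l with
  | nil => rfl
  | cons i l ih =>
      rw [derivY_cons, derivY_cons, ih, pderivY_eq_pdir', pdir_swap (hf.dY l) _ w]
      rfl

theorem pderivY_derivX {f : EE n → ℂ} (hf : Sm f) (i : Fin n) (l : List (Fin n)) :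
    pderivY n i (derivX n l f) = derivX n l (pderivY n i f) := by
  rw [pderivY_eq_pdir', pderivY_eq_pdir', derivX_pdir hf]

theorem pderivX_derivY {f : EE n → ℂ} (hf : Sm f) (i : Fin n) (l : List (Fin n)) :
    pderivX n i (derivY n l f) = derivY n l (pderivX n i f) := by
  rw [pderivX_eq_pdir, pderivX_eq_pdir, derivY_pdir hf]

theorem derivX_sum {ι : Type*} (s : Finset ι) (F : ι → EE n → ℂ) (hF : ∀ t ∈ s, Sm (F t))
    (l : List (Fin n)) :
    derivX n l (fun p => ∑ t ∈ s, F t p) = fun p => ∑ t ∈ s, derivX n l (F t) p := by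
  induction l with
  | nil => rfl
  | cons i l ih =>
      rw [derivX_cons, ih, pderivX_eq_pdir, pdir_sum s _ (fun t ht => (hF t ht).dX l)]
      rfl

theorem derivY_sum {ι : Type*} (s : Finset ι) (F : ι → EE n → ℂ) (hF : ∀ t ∈ s, Sm (F t))
    (l : List (Fin n)) :
    derivY n l (fun p => ∑ t ∈ s, F t p) = fun p => ∑ t ∈ s, derivY n l (F t) p := by
  induction l with
  | nil => rfl
  | cons i l ih =>
      rw [derivY_cons, ih, pderivY_eq_pdir', pdir_sum s _ (fun t ht => (hF t ht).dY l)]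
      rfl

theorem derivX_const_mul {u : EE n → ℂ} (hu : Sm u) (c : ℂ) (l : List (Fin n)) :
    derivX n l (fun p => c * u p) = fun p => c * derivX n l u p := by
  induction l with
  | nil => rfl
  | cons i l ih =>
      rw [derivX_cons, ih, pderivX_eq_pdir, pdir_const_mul (hu.dX l)]
      rfl

theorem derivY_const_mul {u : EE n → ℂ} (hu : Sm u) (c : ℂ) (l : List (Fin n)) :
    derivY n l (fun p => c * u p) = fun p => c * derivY n l u p := by
  induction l with
  | nil => rfl
  | cons i l ih =>
      rw [derivY_cons, ih, pderivY_eq_pdir', pdir_const_mul (hu.dY l)]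
      rfl

theorem Sm.del {f : EE n → ℂ} (hf : Sm f) : Sm (Del n f) := by
  unfold Del
  exact contDiff_const.mul (ContDiff.sum fun i _ => (hf.pdY i).pdX i)

theorem Sm.delIter {f : EE n → ℂ} (hf : Sm f) (k : ℕ) : Sm ((Del n)^[k] f) := by
  induction k with
  | zero => exact hf
  | succ k ih => rw [Function.iterate_succ_apply']; exact ih.del

/-- push iterated derivatives into `Del` -/
theorem derivXY_del {u : EE n → ℂ} (hu : Sm u) (lV lW : List (Fin n)) :
    derivX n lV (derivY n lW (Del n u)) = Del n (derivX n lV (derivY n lW u)) := by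
  have h1 : derivY n lW (Del n u)
      = fun p => Complex.I / (2 * π) * ∑ i, derivY n lW (pderivX n i (pderivY n i u)) p := by
    rw [show Del n u = fun p => Complex.I / (2*π) * ∑ i, pderivX n i (pderivY n i u) p from rfl,
      derivY_const_mul (by exact ContDiff.sum fun i _ => (hu.pdY i).pdX i),
      derivY_sum Finset.univ _ (fun i _ => (hu.pdY i).pdX i)]
  rw [h1, derivX_const_mul (by exact ContDiff.sum fun i _ => ((hu.pdY i).pdX i).dY lW),
    derivX_sum Finset.univ _ (fun i _ => ((hu.pdY i).pdX i).dY lW)]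
  unfold Del
  congr 1
  funext p
  congr 1
  apply Finset.sum_congr rfl
  intro i _
  have e1 : derivY n lW (pderivX n i (pderivY n i u)) = pderivX n i (pderivY n i (derivY n lW u)) := by
    rw [← pderivX_derivY (hu.pdY i) i lW]
    congr 1
    rw [pderivY_eq_pdir', pderivY_eq_pdir', derivY_pdir hu]
  rw [e1]
  have e2 : derivX n lV (pderivX n i (pderivY n i (derivY n lW u)))
      = pderivX n i (derivX n lV (pderivY n i (derivY n lW u))) := by
    rw [pderivX_eq_pdir, pderivX_eq_pdir, derivX_pdir ((hu.dY lW).pdY i)]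
  rw [e2]
  congr 1
  rw [pderivY_derivX (hu.dY lW) i lV]

/-- Leibniz rule for `Del` -/
theorem Del_mul {u v : EE n → ℂ} (hu : Sm u) (hv : Sm v) :
    Del n (fun p => u p * v p) = fun p => Del n u p * v p + u p * Del n v p
      + Complex.I / (2 * π) *
        ∑ i, (pderivY n i u p * pderivX n i v p + pderivX n i u p * pderivY n i v p) := by
  have step : ∀ i : Fin n, pderivX n i (pderivY n i (fun p => u p * v p))
      = fun p => pderivX n i (pderivY n i u) p * v p + pderivY n i u p * pderivX n i v p
        + (pderivX n i u p * pderivY n i v p + u p * pderivX n i (pderivY n i v) p) := by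
    intro i
    have h1 : pderivY n i (fun p => u p * v p)
        = fun p => pderivY n i u p * v p + u p * pderivY n i v p := by
      rw [pderivY_eq_pdir']; exact pdir_mul hu hv _
    rw [h1]
    have h2 := pdir_add ((hu.pdY i).mul hv) (hu.mul (hv.pdY i)) (w := ((Pi.single i (1:ℝ), 0) : EE n))
    rw [pderivX_eq_pdir, h2, pdir_mul (hu.pdY i) hv, pdir_mul hu (hv.pdY i)]
    rfl
  unfold Del
  funext p
  have : (∑ i, pderivX n i (pderivY n i fun p => u p * v p) p)
      = (∑ i, pderivX n i (pderivY n i u) p * v p)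
        + (∑ i, u p * pderivX n i (pderivY n i v) p)
        + ∑ i, (pderivY n i u p * pderivX n i v p + pderivX n i u p * pderivY n i v p) := by
    rw [← Finset.sum_add_distrib, ← Finset.sum_add_distrib]
    apply Finset.sum_congr rfl
    intro i _
    rw [step i]
    ring
  rw [this]
  rw [← Finset.sum_mul, ← Finset.mul_sum]
  ring



/-- normalizing constant of `DD` -/
def Kc (a b : ℕ) : ℂ :=
  Complex.I ^ a / ((2 * (π:ℂ)) ^ a * (Nat.factorial a : ℂ)) *
    (1 / ((Nat.factorial b : ℂ) * (2 * (π:ℂ) * Complex.I) ^ b))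

/-- the mixed bidifferential operators interpolating between `Cop` and `CopCheck` -/
def DD (n : ℕ) (a b : ℕ) (u v : EE n → ℂ) : EE n → ℂ :=
  fun p => Kc a b *
    ∑ V : Fin a → Fin n, ∑ W : Fin b → Fin n,
      derivX n (List.ofFn V) (derivY n (List.ofFn W) u) p *
        derivY n (List.ofFn V) (derivX n (List.ofFn W) v) p

theorem two_pi_ne : (2 * (π:ℂ)) ≠ 0 := by
  simp [Real.pi_ne_zero, Complex.ofReal_ne_zero]

theorem Kc_ne (a b : ℕ) : Kc a b ≠ 0 := by
  unfold Kc
  apply mul_ne_zero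
  · exact div_ne_zero (pow_ne_zero _ Complex.I_ne_zero)
      (mul_ne_zero (pow_ne_zero _ two_pi_ne) (by exact_mod_cast Nat.cast_ne_zero.2 (Nat.factorial_ne_zero a)))
  · apply div_ne_zero one_ne_zero
    exact mul_ne_zero (by exact_mod_cast Nat.cast_ne_zero.2 (Nat.factorial_ne_zero b))
      (pow_ne_zero _ (mul_ne_zero two_pi_ne Complex.I_ne_zero))

theorem Kc_succ_left (a b : ℕ) :
    ((a:ℂ) + 1) * Kc (a+1) b = Complex.I / (2 * π) * Kc a b := by
  have h1 : ((Nat.factorial (a+1) : ℕ) : ℂ) = ((a:ℂ)+1) * (Nat.factorial a : ℂ) := by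
    push_cast [Nat.factorial_succ]; ring
  have ha : ((a:ℂ)+1) ≠ 0 := by
    have := Nat.cast_ne_zero (R := ℂ) |>.mpr (Nat.succ_ne_zero a)
    push_cast at this; exact this
  set t := (1 / ((Nat.factorial b : ℂ) * (2 * (π:ℂ) * Complex.I) ^ b)) with ht
  calc ((a:ℂ)+1) * Kc (a+1) b
      = (((a:ℂ)+1) * Complex.I^(a+1)) / (((a:ℂ)+1) * ((2*(π:ℂ))^(a+1) * (Nat.factorial a : ℂ))) * t := by
        rw [Kc, h1]; ring
    _ = Complex.I^(a+1) / ((2*(π:ℂ))^(a+1) * (Nat.factorial a : ℂ)) * t := by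
        rw [mul_div_mul_left _ _ ha]
    _ = Complex.I / (2 * π) * Kc a b := by rw [Kc, pow_succ, pow_succ]; ring


theorem Kc_succ_right (a b : ℕ) :
    -(((b:ℂ) + 1) * Kc a (b+1)) = Complex.I / (2 * π) * Kc a b := by
  have h1 : ((Nat.factorial (b+1) : ℕ) : ℂ) = ((b:ℂ)+1) * (Nat.factorial b : ℂ) := by
    push_cast [Nat.factorial_succ]; ring
  have hb : ((b:ℂ)+1) ≠ 0 := by
    have := Nat.cast_ne_zero (R := ℂ) |>.mpr (Nat.succ_ne_zero b)
    push_cast at this; exact this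
  have hmini : (1:ℂ) / (2*(π:ℂ)*Complex.I) = (-Complex.I)/(2*(π:ℂ)) := by
    rw [div_eq_div_iff (mul_ne_zero two_pi_ne Complex.I_ne_zero) two_pi_ne]
    linear_combination (2*(π:ℂ)) * Complex.I_mul_I
  set t := Complex.I ^ a / ((2 * (π:ℂ)) ^ a * (Nat.factorial a : ℂ)) with ht
  calc -(((b:ℂ)+1) * Kc a (b+1))
      = -(t * ((((b:ℂ)+1) * 1) / (((b:ℂ)+1) * ((Nat.factorial b : ℂ) * (2*(π:ℂ)*Complex.I)^b * (2*(π:ℂ)*Complex.I))))) := by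
        rw [Kc, h1, pow_succ]; ring
    _ = -(t * (1 / ((Nat.factorial b : ℂ) * (2*(π:ℂ)*Complex.I)^b * (2*(π:ℂ)*Complex.I)))) := by
        rw [mul_div_mul_left _ _ hb]
    _ = -(t * (1 / ((Nat.factorial b : ℂ) * (2*(π:ℂ)*Complex.I)^b)) * ((1:ℂ) / (2*(π:ℂ)*Complex.I))) := by
        ring
    _ = Complex.I / (2 * π) * Kc a b := by
        rw [hmini, Kc]; ring


theorem ofFn_cons (a : ℕ) (i : Fin n) (V : Fin a → Fin n) :
    List.ofFn (Fin.cons i V : Fin (a+1) → Fin n) = i :: List.ofFn V := by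
  simp [List.ofFn_succ]

theorem cons_sum (b : ℕ) (F : (Fin (b+1) → Fin n) → ℂ) :
    ∑ W : Fin (b+1) → Fin n, F W = ∑ i : Fin n, ∑ W : Fin b → Fin n, F (Fin.cons i W) := by
  have h : ∑ W : Fin (b+1) → Fin n, F W
      = ∑ q : Fin n × (Fin b → Fin n), F (Fin.cons q.1 q.2) :=
    (Fintype.sum_equiv (Fin.consEquiv (fun _ => Fin n)) _ _ (fun q => rfl)).symm
  rw [h, Fintype.sum_prod_type]

theorem Sm.DD {u v : EE n → ℂ} (hu : Sm u) (hv : Sm v) (a b : ℕ) : Sm (DD n a b u v) := by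
  unfold _root_.Stmt14.DD
  exact contDiff_const.mul (ContDiff.sum fun V _ => ContDiff.sum fun W _ =>
    (((hu.dY _).dX _).mul ((hv.dX _).dY _)))



theorem Del_const_mul {u : EE n → ℂ} (hu : Sm u) (c : ℂ) :
    Del n (fun p => c * u p) = fun p => c * Del n u p := by
  unfold Del
  have h : ∀ i : Fin n, pderivX n i (pderivY n i (fun p => c * u p))
      = fun p => c * pderivX n i (pderivY n i u) p := by
    intro i
    rw [pderivX_eq_pdir, pderivY_eq_pdir', pdir_const_mul hu, pdir_const_mul (hu.pdir _)]
    rfl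
  funext p
  simp only [h]
  rw [← Finset.mul_sum]
  ring

theorem Del_sum {ι : Type*} (s : Finset ι) (F : ι → EE n → ℂ) (hF : ∀ t ∈ s, Sm (F t)) :
    Del n (fun p => ∑ t ∈ s, F t p) = fun p => ∑ t ∈ s, Del n (F t) p := by
  unfold Del
  have h2 : ∀ i : Fin n, pderivX n i (pderivY n i (fun p => ∑ t ∈ s, F t p))
      = fun p => ∑ t ∈ s, pderivX n i (pderivY n i (F t)) p := by
    intro i
    rw [pderivX_eq_pdir, pderivY_eq_pdir', pdir_sum s F hF,
      pdir_sum s _ (fun t ht => (hF t ht).pdir _)]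
    rfl
  funext p
  simp only [h2]
  conv_rhs => rw [← Finset.mul_sum]
  rw [Finset.sum_comm]

theorem derivYX_del {v : EE n → ℂ} (hv : Sm v) (lV lW : List (Fin n)) :
    derivY n lV (derivX n lW (Del n v)) = Del n (derivY n lV (derivX n lW v)) := by
  have h1 : derivX n lW (Del n v)
      = fun p => Complex.I / (2 * π) * ∑ i, derivX n lW (pderivX n i (pderivY n i v)) p := by
    rw [show Del n v = fun p => Complex.I / (2*π) * ∑ i, pderivX n i (pderivY n i v) p from rfl,
      derivX_const_mul (by exact ContDiff.sum fun i _ => (hv.pdY i).pdX i),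
      derivX_sum Finset.univ _ (fun i _ => (hv.pdY i).pdX i)]
  rw [h1, derivY_const_mul (by exact ContDiff.sum fun i _ => ((hv.pdY i).pdX i).dX lW),
    derivY_sum Finset.univ _ (fun i _ => ((hv.pdY i).pdX i).dX lW)]
  unfold Del
  funext p
  congr 1
  apply Finset.sum_congr rfl
  intro i _
  have e1 : derivX n lW (pderivX n i (pderivY n i v))
      = pderivX n i (pderivY n i (derivX n lW v)) := by
    rw [pderivX_eq_pdir, derivX_pdir (hv.pdY i), ← pderivY_derivX hv i lW]
    rfl
  rw [e1]
  have e2 : derivY n lV (pderivX n i (pderivY n i (derivX n lW v)))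
      = pderivX n i (derivY n lV (pderivY n i (derivX n lW v))) := by
    rw [pderivX_eq_pdir, pderivX_eq_pdir, derivY_pdir ((hv.dX lW).pdY i)]
  rw [e2]
  congr 1
  rw [pderivY_eq_pdir', pderivY_eq_pdir', derivY_pdir (hv.dX lW)]

theorem pull {ι : Type*} (s : Finset ι) (x y : ℂ) (F : ι → ℂ) :
    x * y * ∑ i ∈ s, F i = ∑ i ∈ s, x * (y * F i) := by
  rw [Finset.mul_sum]
  exact Finset.sum_congr rfl fun i _ => by ring

theorem Del_DD {u v : EE n → ℂ} (hu : Sm u) (hv : Sm v) (a b : ℕ) :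
    Del n (DD n a b u v) = fun p =>
      DD n a b (Del n u) v p + DD n a b u (Del n v) p
      + ((a:ℂ)+1) * DD n (a+1) b u v p - ((b:ℂ)+1) * DD n a (b+1) u v p := by
  have smX : ∀ (lV lW : List (Fin n)), Sm (derivX n lV (derivY n lW u)) :=
    fun lV lW => (hu.dY lW).dX lV
  have smY : ∀ (lV lW : List (Fin n)), Sm (derivY n lV (derivX n lW v)) :=
    fun lV lW => (hv.dX lW).dY lV
  -- the inner double sum
  have smS : Sm (fun q => ∑ V : Fin a → Fin n, ∑ W : Fin b → Fin n,
      derivX n (List.ofFn V) (derivY n (List.ofFn W) u) q *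
        derivY n (List.ofFn V) (derivX n (List.ofFn W) v) q) :=
    ContDiff.sum fun V _ => ContDiff.sum fun W _ => (smX _ _).mul (smY _ _)
  have e1 : Del n (DD n a b u v) = fun p => Kc a b * Del n
      (fun q => ∑ V : Fin a → Fin n, ∑ W : Fin b → Fin n,
        derivX n (List.ofFn V) (derivY n (List.ofFn W) u) q *
          derivY n (List.ofFn V) (derivX n (List.ofFn W) v) q) p :=
    Del_const_mul smS (Kc a b)
  have e2 : Del n (fun q => ∑ V : Fin a → Fin n, ∑ W : Fin b → Fin n,
        derivX n (List.ofFn V) (derivY n (List.ofFn W) u) q *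
          derivY n (List.ofFn V) (derivX n (List.ofFn W) v) q)
      = fun p => ∑ V : Fin a → Fin n, Del n (fun q => ∑ W : Fin b → Fin n,
        derivX n (List.ofFn V) (derivY n (List.ofFn W) u) q *
          derivY n (List.ofFn V) (derivX n (List.ofFn W) v) q) p :=
    Del_sum Finset.univ _ (fun V _ => ContDiff.sum fun W _ => (smX _ _).mul (smY _ _))
  have e3 : ∀ V : Fin a → Fin n, Del n (fun q => ∑ W : Fin b → Fin n,
        derivX n (List.ofFn V) (derivY n (List.ofFn W) u) q *
          derivY n (List.ofFn V) (derivX n (List.ofFn W) v) q)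
      = fun p => ∑ W : Fin b → Fin n, Del n (fun q =>
        derivX n (List.ofFn V) (derivY n (List.ofFn W) u) q *
          derivY n (List.ofFn V) (derivX n (List.ofFn W) v) q) p :=
    fun V => Del_sum Finset.univ _ (fun W _ => (smX _ _).mul (smY _ _))
  have e4 : ∀ (V : Fin a → Fin n) (W : Fin b → Fin n), Del n (fun q =>
        derivX n (List.ofFn V) (derivY n (List.ofFn W) u) q *
          derivY n (List.ofFn V) (derivX n (List.ofFn W) v) q)
      = fun p => Del n (derivX n (List.ofFn V) (derivY n (List.ofFn W) u)) p *
            derivY n (List.ofFn V) (derivX n (List.ofFn W) v) p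
          + derivX n (List.ofFn V) (derivY n (List.ofFn W) u) p *
            Del n (derivY n (List.ofFn V) (derivX n (List.ofFn W) v)) p
          + Complex.I / (2 * π) * ∑ i,
            (pderivY n i (derivX n (List.ofFn V) (derivY n (List.ofFn W) u)) p *
              pderivX n i (derivY n (List.ofFn V) (derivX n (List.ofFn W) v)) p
            + pderivX n i (derivX n (List.ofFn V) (derivY n (List.ofFn W) u)) p *
              pderivY n i (derivY n (List.ofFn V) (derivX n (List.ofFn W) v)) p) :=
    fun V W => Del_mul (smX _ _) (smY _ _)
  -- right-hand side pieces
  have r1 : DD n a b (Del n u) v = fun p => Kc a b *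
      ∑ V : Fin a → Fin n, ∑ W : Fin b → Fin n,
        Del n (derivX n (List.ofFn V) (derivY n (List.ofFn W) u)) p *
          derivY n (List.ofFn V) (derivX n (List.ofFn W) v) p := by
    unfold DD
    funext p
    congr 1
    refine Finset.sum_congr rfl fun V _ => Finset.sum_congr rfl fun W _ => ?_
    rw [derivXY_del hu]
  have r2 : DD n a b u (Del n v) = fun p => Kc a b *
      ∑ V : Fin a → Fin n, ∑ W : Fin b → Fin n,
        derivX n (List.ofFn V) (derivY n (List.ofFn W) u) p *
          Del n (derivY n (List.ofFn V) (derivX n (List.ofFn W) v)) p := by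
    unfold DD
    funext p
    congr 1
    refine Finset.sum_congr rfl fun V _ => Finset.sum_congr rfl fun W _ => ?_
    rw [derivYX_del hv]
  have r3 : ∀ p, ((a:ℂ)+1) * DD n (a+1) b u v p = Complex.I / (2 * π) * (Kc a b *
      ∑ V : Fin a → Fin n, ∑ W : Fin b → Fin n, ∑ i,
        pderivX n i (derivX n (List.ofFn V) (derivY n (List.ofFn W) u)) p *
          pderivY n i (derivY n (List.ofFn V) (derivX n (List.ofFn W) v)) p) := by
    intro p
    unfold DD
    rw [← mul_assoc, Kc_succ_left, cons_sum a (fun V' => ∑ W : Fin b → Fin n,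
      derivX n (List.ofFn V') (derivY n (List.ofFn W) u) p *
        derivY n (List.ofFn V') (derivX n (List.ofFn W) v) p)]
    rw [mul_assoc]
    congr 1
    congr 1
    rw [Finset.sum_comm]
    refine Finset.sum_congr rfl fun V _ => ?_
    rw [Finset.sum_comm]
    refine Finset.sum_congr rfl fun W _ => Finset.sum_congr rfl fun i _ => ?_
    rw [ofFn_cons, derivX_cons, derivY_cons]
  have r4 : ∀ p, ((b:ℂ)+1) * DD n a (b+1) u v p = -(Complex.I / (2 * π) * (Kc a b *
      ∑ V : Fin a → Fin n, ∑ W : Fin b → Fin n, ∑ i,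
        pderivY n i (derivX n (List.ofFn V) (derivY n (List.ofFn W) u)) p *
          pderivX n i (derivY n (List.ofFn V) (derivX n (List.ofFn W) v)) p)) := by
    intro p
    unfold DD
    rw [← mul_assoc, show ((b:ℂ)+1) * Kc a (b+1) = -(Complex.I / (2 * π) * Kc a b) by
      rw [← Kc_succ_right]; ring]
    rw [neg_mul, mul_assoc, neg_inj]
    congr 1
    congr 1
    refine Finset.sum_congr rfl fun V _ => ?_
    rw [cons_sum b (fun W' => derivX n (List.ofFn V) (derivY n (List.ofFn W') u) p *
        derivY n (List.ofFn V) (derivX n (List.ofFn W') v) p), Finset.sum_comm]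
    refine Finset.sum_congr rfl fun W _ => Finset.sum_congr rfl fun i _ => ?_
    rw [ofFn_cons, derivY_cons, derivX_cons,
      ← pderivY_derivX (hu.dY (List.ofFn W)) i (List.ofFn V),
      ← pderivX_derivY (hv.dX (List.ofFn W)) i (List.ofFn V)]
  -- assemble
  funext p
  rw [show Del n (DD n a b u v) p = Kc a b * Del n
      (fun q => ∑ V : Fin a → Fin n, ∑ W : Fin b → Fin n,
        derivX n (List.ofFn V) (derivY n (List.ofFn W) u) q *
          derivY n (List.ofFn V) (derivX n (List.ofFn W) v) q) p from congrFun e1 p,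
    e2]
  simp only [e3, e4]
  rw [r1, r2, r3 p, r4 p, sub_neg_eq_add]
  simp only [Finset.mul_sum]
  simp only [← Finset.sum_add_distrib]
  refine Finset.sum_congr rfl fun V _ => Finset.sum_congr rfl fun W _ => ?_
  rw [← pull Finset.univ (Complex.I / (2 * π)) (Kc a b), ← pull Finset.univ (Complex.I / (2 * π)) (Kc a b)]
  rw [← Finset.mul_sum, Finset.sum_add_distrib]
  ring



theorem Cop_eq_DD (b : ℕ) (u v : EE n → ℂ) : Cop n b u v = DD n 0 b u v := by
  unfold Cop DD Kc
  funext p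
  rw [show ∑ V : Fin 0 → Fin n, ∑ W : Fin b → Fin n,
      derivX n (List.ofFn V) (derivY n (List.ofFn W) u) p *
        derivY n (List.ofFn V) (derivX n (List.ofFn W) v) p
    = ∑ W : Fin b → Fin n, derivY n (List.ofFn W) u p * derivX n (List.ofFn W) v p by
      rw [Fintype.sum_unique]
      refine Finset.sum_congr rfl fun W _ => ?_
      rw [show List.ofFn (default : Fin 0 → Fin n) = [] from List.ofFn_zero]
      rfl]
  simp [Nat.factorial_zero]

theorem CopCheck_eq_DD (a : ℕ) (u v : EE n → ℂ) : CopCheck n a u v = DD n a 0 u v := by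
  unfold CopCheck DD Kc
  funext p
  rw [show ∑ V : Fin a → Fin n, ∑ W : Fin 0 → Fin n,
      derivX n (List.ofFn V) (derivY n (List.ofFn W) u) p *
        derivY n (List.ofFn V) (derivX n (List.ofFn W) v) p
    = ∑ V : Fin a → Fin n, derivX n (List.ofFn V) u p * derivY n (List.ofFn V) v p by
      refine Finset.sum_congr rfl fun V _ => ?_
      rw [Fintype.sum_unique]
      rw [show List.ofFn (default : Fin 0 → Fin n) = [] from List.ofFn_zero]
      rfl]
  simp [Nat.factorial_zero]

variable (n) in
/-- the rescaled family: all ladder coefficients become `1` -/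
def Efun (f g : EE n → ℂ) (d : Fin 4 →₀ ℕ) : EE n → ℂ :=
  fun pt => (((d 2).factorial : ℂ) * ((-1)^(d 3) * ((d 3).factorial : ℂ))) *
    DD n (d 2) (d 3) ((Del n)^[d 0] f) ((Del n)^[d 1] g) pt

theorem Sm.efun {f g : EE n → ℂ} (hf : Sm f) (hg : Sm g) (d : Fin 4 →₀ ℕ) :
    Sm (Efun n f g d) :=
  contDiff_const.mul (Sm.DD (hf.delIter _) (hg.delIter _) _ _)

theorem Efun_del {f g : EE n → ℂ} (hf : Sm f) (hg : Sm g) (d : Fin 4 →₀ ℕ) :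
    Del n (Efun n f g d) = fun pt => ∑ i : Fin 4, Efun n f g (d + Finsupp.single i 1) pt := by
  have e0 : Del n (Efun n f g d) = fun pt =>
      (((d 2).factorial : ℂ) * ((-1)^(d 3) * ((d 3).factorial : ℂ))) *
        Del n (DD n (d 2) (d 3) ((Del n)^[d 0] f) ((Del n)^[d 1] g)) pt :=
    Del_const_mul (Sm.DD (hf.delIter _) (hg.delIter _) _ _) _
  rw [e0, Del_DD (hf.delIter _) (hg.delIter _)]
  funext pt
  rw [Fin.sum_univ_four]
  simp only [Efun, Finsupp.add_apply, Finsupp.single_apply]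
  simp only [Fin.isValue, show ((0:Fin 4) = 0) = True from by decide, show ((0:Fin 4) = 1) = False from by decide, show ((0:Fin 4) = 2) = False from by decide, show ((0:Fin 4) = 3) = False from by decide, show ((1:Fin 4) = 0) = False from by decide, show ((1:Fin 4) = 1) = True from by decide, show ((1:Fin 4) = 2) = False from by decide, show ((1:Fin 4) = 3) = False from by decide, show ((2:Fin 4) = 0) = False from by decide, show ((2:Fin 4) = 1) = False from by decide, show ((2:Fin 4) = 2) = True from by decide, show ((2:Fin 4) = 3) = False from by decide, show ((3:Fin 4) = 0) = False from by decide, show ((3:Fin 4) = 1) = False from by decide, show ((3:Fin 4) = 2) = False from by decide, show ((3:Fin 4) = 3) = True from by decide, if_true, if_false, add_zero]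
  rw [← Function.iterate_succ_apply' (Del n) (d 0) f, ← Function.iterate_succ_apply' (Del n) (d 1) g]
  push_cast [Nat.factorial_succ, pow_succ]
  ring



theorem Del_add {u v : EE n → ℂ} (hu : Sm u) (hv : Sm v) :
    Del n (fun p => u p + v p) = fun p => Del n u p + Del n v p := by
  unfold Del
  have h : ∀ i : Fin n, pderivX n i (pderivY n i (fun p => u p + v p))
      = fun p => pderivX n i (pderivY n i u) p + pderivX n i (pderivY n i v) p := by
    intro i
    rw [pderivX_eq_pdir, pderivY_eq_pdir', pdir_add hu hv, pdir_add (hu.pdir _) (hv.pdir _)]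
    rfl
  funext p
  simp only [h]
  rw [Finset.sum_add_distrib]
  ring

variable (n) in
def Phi (f g : EE n → ℂ) (P : MvPolynomial (Fin 4) ℂ) : EE n → ℂ :=
  fun pt => Finsupp.sum (AddMonoidAlgebra.coeff P) fun d c => c * Efun n f g d pt

theorem Phi_add (f g : EE n → ℂ) (P Q : MvPolynomial (Fin 4) ℂ) :
    Phi n f g (P + Q) = fun pt => Phi n f g P pt + Phi n f g Q pt := by
  funext pt
  exact Finsupp.sum_add_index' (by simp) (by intros; ring)

theorem Phi_monomial (f g : EE n → ℂ) (d : Fin 4 →₀ ℕ) (c : ℂ) :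
    Phi n f g (MvPolynomial.monomial d c) = fun pt => c * Efun n f g d pt := by
  funext pt
  unfold Phi
  rw [← MvPolynomial.single_eq_monomial, AddMonoidAlgebra.coeff_single]
  exact Finsupp.sum_single_index (by simp)

theorem Phi_smul (f g : EE n → ℂ) (c : ℂ) (P : MvPolynomial (Fin 4) ℂ) :
    Phi n f g (c • P) = fun pt => c * Phi n f g P pt := by
  funext pt
  unfold Phi
  rw [AddMonoidAlgebra.coeff_smul, Finsupp.sum_smul_index (by simp), Finsupp.mul_sum]
  exact Finset.sum_congr rfl fun d _ => by ring

theorem Phi_sum {ι : Type*} (f g : EE n → ℂ) (s : Finset ι) (F : ι → MvPolynomial (Fin 4) ℂ) :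
    Phi n f g (∑ t ∈ s, F t) = fun pt => ∑ t ∈ s, Phi n f g (F t) pt := by
  classical
  induction s using Finset.induction with
  | empty => funext pt; simp [Phi]
  | insert _ _ h ih =>
      rename_i a s'
      rw [Finset.sum_insert h, Phi_add, ih]
      funext pt
      rw [Finset.sum_insert h]

theorem Sm.phi {f g : EE n → ℂ} (hf : Sm f) (hg : Sm g) (P : MvPolynomial (Fin 4) ℂ) :
    Sm (Phi n f g P) := by
  have h : Phi n f g P = fun pt => ∑ d ∈ P.support, MvPolynomial.coeff d P * Efun n f g d pt := rfl
  rw [h]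
  exact ContDiff.sum fun d _ => contDiff_const.mul (Sm.efun hf hg d)

theorem X_mul_monomial' (i : Fin 4) (d : Fin 4 →₀ ℕ) (c : ℂ) :
    (MvPolynomial.X i) * MvPolynomial.monomial d c
      = MvPolynomial.monomial (d + Finsupp.single i 1) c := by
  rw [MvPolynomial.X, MvPolynomial.monomial_mul, one_mul, add_comm]

theorem Del_Phi {f g : EE n → ℂ} (hf : Sm f) (hg : Sm g) (P : MvPolynomial (Fin 4) ℂ) :
    Del n (Phi n f g P)
      = Phi n f g ((MvPolynomial.X 0 + MvPolynomial.X 1 + MvPolynomial.X 2 + MvPolynomial.X 3) * P) := by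
  induction P using MvPolynomial.induction_on' with
  | monomial d c =>
      rw [Phi_monomial, Del_const_mul (Sm.efun hf hg d) c]
      rw [show (MvPolynomial.X 0 + MvPolynomial.X 1 + MvPolynomial.X 2 + MvPolynomial.X 3 :
            MvPolynomial (Fin 4) ℂ) * MvPolynomial.monomial d c
          = ∑ i : Fin 4, MvPolynomial.monomial (d + Finsupp.single i 1) c by
        rw [Fin.sum_univ_four, ← X_mul_monomial', ← X_mul_monomial', ← X_mul_monomial',
          ← X_mul_monomial']
        ring]
      rw [Phi_sum]
      funext pt
      rw [Efun_del hf hg d]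
      rw [Finset.mul_sum]
      refine Finset.sum_congr rfl fun i _ => ?_
      rw [Phi_monomial]
  | add P Q ihP ihQ =>
      rw [Phi_add, Del_add (Sm.phi hf hg P) (Sm.phi hf hg Q), mul_add, Phi_add, ihP, ihQ]

theorem Del_iter_Phi {f g : EE n → ℂ} (hf : Sm f) (hg : Sm g) (k : ℕ) (P : MvPolynomial (Fin 4) ℂ) :
    (Del n)^[k] (Phi n f g P)
      = Phi n f g ((MvPolynomial.X 0 + MvPolynomial.X 1 + MvPolynomial.X 2 + MvPolynomial.X 3)^k * P) := by
  induction k generalizing P with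
  | zero => rw [Function.iterate_zero_apply, pow_zero, one_mul]
  | succ k ih =>
      rw [Function.iterate_succ_apply', ih, Del_Phi hf hg,
        show (MvPolynomial.X 0 + MvPolynomial.X 1 + MvPolynomial.X 2 + MvPolynomial.X 3 :
            MvPolynomial (Fin 4) ℂ) *
          ((MvPolynomial.X 0 + MvPolynomial.X 1 + MvPolynomial.X 2 + MvPolynomial.X 3)^k * P)
        = (MvPolynomial.X 0 + MvPolynomial.X 1 + MvPolynomial.X 2 + MvPolynomial.X 3)^(k+1) * P by
          rw [pow_succ]; ring]



theorem L0 (u v : MvPolynomial (Fin 4) ℂ) (N : ℕ) :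
    ∑ kb ∈ Finset.HasAntidiagonal.antidiagonal N,
        ((1:ℂ)/((kb.1.factorial : ℂ) * (kb.2.factorial : ℂ))) • (u ^ kb.1 * v ^ kb.2)
      = ((1:ℂ)/(N.factorial : ℂ)) • (u + v) ^ N := by
  rw [Finset.Nat.sum_antidiagonal_eq_sum_range_succ_mk, add_pow, Finset.smul_sum]
  refine Finset.sum_congr rfl fun m hm => ?_
  have hm' : m ≤ N := Nat.lt_succ_iff.mp (Finset.mem_range.mp hm)
  have hfact := Nat.choose_mul_factorial_mul_factorial hm'
  have hcast : ((N.choose m : ℕ) : ℂ) * ((m.factorial : ℂ) * ((N-m).factorial : ℂ)) = (N.factorial : ℂ) := by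
    exact_mod_cast congrArg (Nat.cast : ℕ → ℂ) (by rw [← mul_assoc]; exact hfact)
  rw [show (u^m * v^(N-m) * (N.choose m : MvPolynomial (Fin 4) ℂ))
      = (N.choose m : ℕ) • (u^m * v^(N-m)) by rw [nsmul_eq_mul]; ring]
  rw [← Nat.cast_smul_eq_nsmul ℂ, smul_smul]
  congr 1
  have h1 : (m.factorial : ℂ) * ((N-m).factorial : ℂ) ≠ 0 :=
    mul_ne_zero (Nat.cast_ne_zero.2 (Nat.factorial_ne_zero m))
      (Nat.cast_ne_zero.2 (Nat.factorial_ne_zero _))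
  have hN : ((N.factorial : ℕ) : ℂ) ≠ 0 := Nat.cast_ne_zero.2 (Nat.factorial_ne_zero N)
  have hh : (1:ℂ)/(N.factorial : ℂ) * ((N.choose m : ℕ):ℂ) = ((N.choose m : ℕ):ℂ)/(N.factorial : ℂ) := by
    ring
  rw [hh, div_eq_div_iff h1 hN]
  linear_combination -hcast

theorem neg1_smul_eq (b : ℕ) (M : MvPolynomial (Fin 4) ℂ) :
    ((-1:ℂ))^b • M = (-1 : MvPolynomial (Fin 4) ℂ)^b * M := by
  induction b generalizing M with
  | zero => simp
  | succ b ih =>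
      rw [pow_succ, pow_succ, mul_smul, ih (((-1:ℂ)) • M), neg_one_smul]
      ring

theorem PI (N : ℕ) :
    ∑ kb ∈ Finset.HasAntidiagonal.antidiagonal N,
        (((-1:ℂ))^kb.2 / ((kb.1.factorial : ℂ) * (kb.2.factorial : ℂ))) •
          ((MvPolynomial.X 0 + MvPolynomial.X 1 + MvPolynomial.X 2 + MvPolynomial.X 3 :
            MvPolynomial (Fin 4) ℂ) ^ kb.1 * (MvPolynomial.X 3) ^ kb.2)
      = ∑ rs ∈ Finset.HasAntidiagonal.antidiagonal N, ∑ pq ∈ Finset.HasAntidiagonal.antidiagonal rs.2,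
          ((1:ℂ)/((pq.1.factorial : ℂ) * (pq.2.factorial : ℂ) * (rs.1.factorial : ℂ))) •
            ((MvPolynomial.X (R := ℂ) (0 : Fin 4))^pq.1 * (MvPolynomial.X (R := ℂ) (1 : Fin 4))^pq.2 * (MvPolynomial.X (R := ℂ) (2 : Fin 4))^rs.1) := by
  have lhs_eq : ∑ kb ∈ Finset.HasAntidiagonal.antidiagonal N,
        (((-1:ℂ))^kb.2 / ((kb.1.factorial : ℂ) * (kb.2.factorial : ℂ))) •
          ((MvPolynomial.X 0 + MvPolynomial.X 1 + MvPolynomial.X 2 + MvPolynomial.X 3 :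
            MvPolynomial (Fin 4) ℂ) ^ kb.1 * (MvPolynomial.X 3) ^ kb.2)
      = ∑ kb ∈ Finset.HasAntidiagonal.antidiagonal N,
        ((1:ℂ)/((kb.1.factorial : ℂ) * (kb.2.factorial : ℂ))) •
          ((MvPolynomial.X 0 + MvPolynomial.X 1 + MvPolynomial.X 2 + MvPolynomial.X 3 :
            MvPolynomial (Fin 4) ℂ) ^ kb.1 * (- MvPolynomial.X 3) ^ kb.2) := by
    refine Finset.sum_congr rfl fun kb _ => ?_
    rw [neg_pow (MvPolynomial.X (R := ℂ) (3 : Fin 4))]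
    rw [show ((MvPolynomial.X 0 + MvPolynomial.X 1 + MvPolynomial.X 2 + MvPolynomial.X 3 :
          MvPolynomial (Fin 4) ℂ) ^ kb.1 * ((-1 : MvPolynomial (Fin 4) ℂ)^kb.2 * (MvPolynomial.X (R := ℂ) (3 : Fin 4))^kb.2))
        = (-1 : MvPolynomial (Fin 4) ℂ)^kb.2 *
          ((MvPolynomial.X 0 + MvPolynomial.X 1 + MvPolynomial.X 2 + MvPolynomial.X 3 :
          MvPolynomial (Fin 4) ℂ) ^ kb.1 * (MvPolynomial.X (R := ℂ) (3 : Fin 4))^kb.2) by ring]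
    rw [← neg1_smul_eq, smul_smul]
    congr 1
    ring
  rw [lhs_eq, L0]
  have rhs_eq : ∀ rs : ℕ × ℕ, ∑ pq ∈ Finset.HasAntidiagonal.antidiagonal rs.2,
        ((1:ℂ)/((pq.1.factorial : ℂ) * (pq.2.factorial : ℂ) * (rs.1.factorial : ℂ))) •
          ((MvPolynomial.X (R := ℂ) (0 : Fin 4))^pq.1 * (MvPolynomial.X (R := ℂ) (1 : Fin 4))^pq.2 * (MvPolynomial.X (R := ℂ) (2 : Fin 4))^rs.1)
      = ((1:ℂ)/((rs.2.factorial : ℂ) * (rs.1.factorial : ℂ))) •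
          ((MvPolynomial.X 0 + MvPolynomial.X 1 : MvPolynomial (Fin 4) ℂ)^rs.2 *
            (MvPolynomial.X (R := ℂ) (2 : Fin 4))^rs.1) := by
    intro rs
    have step : ∑ pq ∈ Finset.HasAntidiagonal.antidiagonal rs.2,
          ((1:ℂ)/((pq.1.factorial : ℂ) * (pq.2.factorial : ℂ) * (rs.1.factorial : ℂ))) •
            ((MvPolynomial.X (R := ℂ) (0 : Fin 4))^pq.1 * (MvPolynomial.X (R := ℂ) (1 : Fin 4))^pq.2 * (MvPolynomial.X (R := ℂ) (2 : Fin 4))^rs.1)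
        = ((1:ℂ)/(rs.1.factorial : ℂ)) • ((∑ pq ∈ Finset.HasAntidiagonal.antidiagonal rs.2,
            ((1:ℂ)/((pq.1.factorial : ℂ) * (pq.2.factorial : ℂ))) •
              ((MvPolynomial.X (R := ℂ) (0 : Fin 4))^pq.1 * (MvPolynomial.X (R := ℂ) (1 : Fin 4))^pq.2)) * (MvPolynomial.X (R := ℂ) (2 : Fin 4))^rs.1) := by
      rw [Finset.sum_mul, Finset.smul_sum]
      refine Finset.sum_congr rfl fun pq _ => ?_
      rw [smul_mul_assoc, smul_smul]
      congr 1
      ring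
    rw [step, L0, smul_mul_assoc, smul_smul]
    congr 1
    ring
  rw [show ∑ rs ∈ Finset.HasAntidiagonal.antidiagonal N, ∑ pq ∈ Finset.HasAntidiagonal.antidiagonal rs.2,
        ((1:ℂ)/((pq.1.factorial : ℂ) * (pq.2.factorial : ℂ) * (rs.1.factorial : ℂ))) •
          ((MvPolynomial.X (R := ℂ) (0 : Fin 4))^pq.1 * (MvPolynomial.X (R := ℂ) (1 : Fin 4))^pq.2 * (MvPolynomial.X (R := ℂ) (2 : Fin 4))^rs.1)
      = ∑ rs ∈ Finset.HasAntidiagonal.antidiagonal N, ((1:ℂ)/((rs.2.factorial : ℂ) * (rs.1.factorial : ℂ))) •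
          ((MvPolynomial.X 0 + MvPolynomial.X 1 : MvPolynomial (Fin 4) ℂ)^rs.2 *
            (MvPolynomial.X (R := ℂ) (2 : Fin 4))^rs.1)
      from Finset.sum_congr rfl fun rs _ => rhs_eq rs]
  have swap_eq : ∑ rs ∈ Finset.HasAntidiagonal.antidiagonal N,
        ((1:ℂ)/((rs.2.factorial : ℂ) * (rs.1.factorial : ℂ))) •
          ((MvPolynomial.X 0 + MvPolynomial.X 1 : MvPolynomial (Fin 4) ℂ)^rs.2 *
            (MvPolynomial.X (R := ℂ) (2 : Fin 4))^rs.1)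
      = ∑ ab ∈ Finset.HasAntidiagonal.antidiagonal N,
        ((1:ℂ)/((ab.1.factorial : ℂ) * (ab.2.factorial : ℂ))) •
          ((MvPolynomial.X 0 + MvPolynomial.X 1 : MvPolynomial (Fin 4) ℂ)^ab.1 *
            (MvPolynomial.X (R := ℂ) (2 : Fin 4))^ab.2) := by
    refine Eq.trans (Finset.sum_congr rfl fun p _ => ?_)
      (Finset.Nat.sum_antidiagonal_swap (f := fun ab =>
        ((1:ℂ)/((ab.1.factorial : ℂ) * (ab.2.factorial : ℂ))) •
          ((MvPolynomial.X 0 + MvPolynomial.X 1 : MvPolynomial (Fin 4) ℂ)^ab.1 *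
            (MvPolynomial.X (R := ℂ) (2 : Fin 4))^ab.2)))
    simp
  rw [swap_eq, L0]
  congr 2
  ring

theorem Cop_as_Phi {f g : EE n → ℂ} (hf : Sm f) (hg : Sm g) (b : ℕ) :
    Cop n b f g = Phi n f g (MvPolynomial.monomial (Finsupp.single (3 : Fin 4) b)
      (((-1:ℂ))^b / (b.factorial : ℂ))) := by
  rw [Phi_monomial, Cop_eq_DD]
  funext pt
  have hb : ((b.factorial : ℕ) : ℂ) ≠ 0 := Nat.cast_ne_zero.2 (Nat.factorial_ne_zero b)
  have hneg : ((-1:ℂ))^b * ((-1:ℂ))^b = 1 := by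
    rw [← pow_add, ← two_mul, pow_mul]
    norm_num
  simp only [Efun, Finsupp.single_apply,
    show ((3:Fin 4) = 0) = False from by decide, show ((3:Fin 4) = 1) = False from by decide,
    show ((3:Fin 4) = 2) = False from by decide, show ((3:Fin 4) = 3) = True from by decide,
    if_true, if_false, Function.iterate_zero_apply, Nat.factorial_zero, Nat.cast_one, one_mul]
  have hs : ((-1:ℂ))^b * (-1:ℂ)^b * ((b.factorial:ℂ) * ((b.factorial:ℂ))⁻¹) = 1 := by
    rw [hneg, mul_inv_cancel₀ hb, one_mul]
  linear_combination (-(DD n 0 b f g pt)) * hs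

theorem CopCheck_as_Phi {f g : EE n → ℂ} (hf : Sm f) (hg : Sm g) (r p q : ℕ) (pt : EE n) :
    ((1:ℂ)/((p.factorial : ℂ) * (q.factorial : ℂ) * (r.factorial : ℂ))) *
        Phi n f g ((MvPolynomial.X (R := ℂ) (0 : Fin 4))^p * (MvPolynomial.X (R := ℂ) (1 : Fin 4))^q *
          (MvPolynomial.X (R := ℂ) (2 : Fin 4))^r) pt
      = (1 / ((p.factorial : ℂ) * (q.factorial : ℂ))) *
          CopCheck n r ((Del n)^[p] f) ((Del n)^[q] g) pt := by
  have hmono : (MvPolynomial.X (R := ℂ) (0 : Fin 4))^p * (MvPolynomial.X (R := ℂ) (1 : Fin 4))^q *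
        (MvPolynomial.X (R := ℂ) (2 : Fin 4))^r
      = MvPolynomial.monomial (Finsupp.single (0:Fin 4) p + Finsupp.single (1:Fin 4) q
          + Finsupp.single (2:Fin 4) r) 1 := by
    rw [MvPolynomial.X_pow_eq_monomial, MvPolynomial.X_pow_eq_monomial,
      MvPolynomial.X_pow_eq_monomial, MvPolynomial.monomial_mul, MvPolynomial.monomial_mul]
    norm_num
  rw [hmono, Phi_monomial, CopCheck_eq_DD]
  have hr : ((r.factorial : ℕ) : ℂ) ≠ 0 := Nat.cast_ne_zero.2 (Nat.factorial_ne_zero r)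
  have hp : ((p.factorial : ℕ) : ℂ) ≠ 0 := Nat.cast_ne_zero.2 (Nat.factorial_ne_zero p)
  have hq : ((q.factorial : ℕ) : ℂ) ≠ 0 := Nat.cast_ne_zero.2 (Nat.factorial_ne_zero q)
  simp only [Efun, Finsupp.add_apply, Finsupp.single_apply,
    show ((0:Fin 4) = 0) = True from by decide, show ((0:Fin 4) = 1) = False from by decide,
    show ((0:Fin 4) = 2) = False from by decide, show ((0:Fin 4) = 3) = False from by decide,
    show ((1:Fin 4) = 0) = False from by decide, show ((1:Fin 4) = 1) = True from by decide,
    show ((1:Fin 4) = 2) = False from by decide, show ((1:Fin 4) = 3) = False from by decide,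
    show ((2:Fin 4) = 0) = False from by decide, show ((2:Fin 4) = 1) = False from by decide,
    show ((2:Fin 4) = 2) = True from by decide, show ((2:Fin 4) = 3) = False from by decide,
    if_true, if_false, add_zero, zero_add, Nat.factorial_zero, pow_zero]
  field_simp
  ring

end Stmt14

open Stmt14 in
theorem statement14_aux (n : ℕ) (f g : (Fin n → ℝ) × (Fin n → ℝ) → ℂ)
    (hf : ContDiff ℝ (⊤ : ℕ∞) f) (hg : ContDiff ℝ (⊤ : ℕ∞) g) :
    ∀ (N : ℕ) (p : (Fin n → ℝ) × (Fin n → ℝ)),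
      (∑ ab ∈ Finset.HasAntidiagonal.antidiagonal N,
          (1 / (Nat.factorial ab.1 : ℂ)) * (Del n)^[ab.1] (Cop n ab.2 f g) p) =
        (∑ abc ∈ Finset.HasAntidiagonal.antidiagonal N, ∑ bc ∈ Finset.HasAntidiagonal.antidiagonal abc.2,
          (1 / ((Nat.factorial bc.1 : ℂ) * (Nat.factorial bc.2 : ℂ))) *
            CopCheck n abc.1 ((Del n)^[bc.1] f) ((Del n)^[bc.2] g) p) := by
  intro N pt
  have hf' : Sm f := hf
  have hg' : Sm g := hg
  have step1 : (∑ ab ∈ Finset.HasAntidiagonal.antidiagonal N,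
      (1 / (Nat.factorial ab.1 : ℂ)) * (Del n)^[ab.1] (Cop n ab.2 f g) pt)
    = ∑ ab ∈ Finset.HasAntidiagonal.antidiagonal N, Phi n f g
        (((1:ℂ) / (Nat.factorial ab.1 : ℂ)) •
          ((MvPolynomial.X 0 + MvPolynomial.X 1 + MvPolynomial.X 2 + MvPolynomial.X 3 :
            MvPolynomial (Fin 4) ℂ)^ab.1 *
          MvPolynomial.monomial (Finsupp.single (3 : Fin 4) ab.2)
            (((-1:ℂ))^ab.2 / (ab.2.factorial : ℂ)))) pt := by
    refine Finset.sum_congr rfl fun ab _ => ?_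
    rw [Cop_as_Phi hf' hg', Del_iter_Phi hf' hg', Phi_smul]
  rw [step1]
  have step2 : ∀ ab : ℕ × ℕ,
      ((1:ℂ) / (Nat.factorial ab.1 : ℂ)) •
        ((MvPolynomial.X 0 + MvPolynomial.X 1 + MvPolynomial.X 2 + MvPolynomial.X 3 :
            MvPolynomial (Fin 4) ℂ)^ab.1 *
          MvPolynomial.monomial (Finsupp.single (3 : Fin 4) ab.2)
            (((-1:ℂ))^ab.2 / (ab.2.factorial : ℂ)))
      = (((-1:ℂ))^ab.2 / ((ab.1.factorial : ℂ) * (ab.2.factorial : ℂ))) •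
        ((MvPolynomial.X 0 + MvPolynomial.X 1 + MvPolynomial.X 2 + MvPolynomial.X 3 :
            MvPolynomial (Fin 4) ℂ)^ab.1 * (MvPolynomial.X 3)^ab.2) := by
    intro ab
    rw [MvPolynomial.X_pow_eq_monomial,
      show MvPolynomial.monomial (Finsupp.single (3 : Fin 4) ab.2)
          (((-1:ℂ))^ab.2 / (ab.2.factorial : ℂ))
        = (((-1:ℂ))^ab.2 / (ab.2.factorial : ℂ)) •
          MvPolynomial.monomial (Finsupp.single (3 : Fin 4) ab.2) (1:ℂ) by
        rw [MvPolynomial.smul_monomial, smul_eq_mul, mul_one],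
      mul_smul_comm, smul_smul]
    congr 1
    ring
  rw [show ∑ ab ∈ Finset.HasAntidiagonal.antidiagonal N, Phi n f g
        (((1:ℂ) / (Nat.factorial ab.1 : ℂ)) •
          ((MvPolynomial.X 0 + MvPolynomial.X 1 + MvPolynomial.X 2 + MvPolynomial.X 3 :
            MvPolynomial (Fin 4) ℂ)^ab.1 *
          MvPolynomial.monomial (Finsupp.single (3 : Fin 4) ab.2)
            (((-1:ℂ))^ab.2 / (ab.2.factorial : ℂ)))) pt
      = Phi n f g (∑ ab ∈ Finset.HasAntidiagonal.antidiagonal N,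
          (((-1:ℂ))^ab.2 / ((ab.1.factorial : ℂ) * (ab.2.factorial : ℂ))) •
          ((MvPolynomial.X 0 + MvPolynomial.X 1 + MvPolynomial.X 2 + MvPolynomial.X 3 :
            MvPolynomial (Fin 4) ℂ)^ab.1 * (MvPolynomial.X 3)^ab.2)) pt by
    rw [Phi_sum]
    exact Finset.sum_congr rfl fun ab _ => by rw [step2 ab]]
  rw [PI]
  rw [Phi_sum]
  refine Finset.sum_congr rfl fun rs _ => ?_
  rw [Phi_sum]
  refine Finset.sum_congr rfl fun pq _ => ?_
  rw [Phi_smul]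
  exact CopCheck_as_Phi hf' hg' rs.1 pq.1 pq.2 pt


/-- The formal operator `e^{ℏΔ}` intertwines `⋆` and `⋆̌` order by order in `ℏ`:
for smooth `ℤ^{2n}`-periodic `f, g` and every `N ≥ 0`,
`Σ_{a+b=N} (1/a!) Δ^a(C_b(f,g)) = Σ_{a+b+c=N} (1/(b!·c!)) Č_a(Δ^b f, Δ^c g)`. -/
theorem statement14 (n : ℕ) (hn : 1 ≤ n) (f g : (Fin n → ℝ) × (Fin n → ℝ) → ℂ)
    (hf : ContDiff ℝ (⊤ : ℕ∞) f) (hg : ContDiff ℝ (⊤ : ℕ∞) g)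
    (hperf : IsPeriodic2 n f) (hperg : IsPeriodic2 n g) :
    ∀ (N : ℕ) (p : (Fin n → ℝ) × (Fin n → ℝ)),
      (∑ ab ∈ Finset.HasAntidiagonal.antidiagonal N,
          (1 / (Nat.factorial ab.1 : ℂ)) * (Del n)^[ab.1] (Cop n ab.2 f g) p) =
        (∑ abc ∈ Finset.HasAntidiagonal.antidiagonal N, ∑ bc ∈ Finset.HasAntidiagonal.antidiagonal abc.2,
          (1 / ((Nat.factorial bc.1 : ℂ) * (Nat.factorial bc.2 : ℂ))) *
            CopCheck n abc.1 ((Del n)^[bc.1] f) ((Del n)^[bc.2] g) p) :=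
  statement14_aux n f g hf hg
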